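/- arXiv:2512.00385 — 2 statements merged into one kernel-verified Lean document; each statement's English description precedes it below -/
import Mathlib

section
/- Let 𝒫 be a partition of C into nonempty blocks, let P, Q be two distinct blocks of 𝒫, and let 𝒫' be obtained from 𝒫 by replacing P and Q with P ∪ Q. Then Ω(𝒫') < Ω(𝒫) if and only if ‖F_P − F_Q‖² < λ · (Σ_{{p,q}∈ℰ, p∈P, q∈Q} w_{p,q}) · (|P|+|Q|)/(|P|·|Q|). -/
open Finset

variable {C E : Type*}

noncomputable def mean [NormedAddCommGroup E] [InnerProductSpace ℝ E]
    (f : C → E) (U : Finset C) : E :=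
  (U.card : ℝ)⁻¹ • ∑ p ∈ U, f p

noncomputable def cost [NormedAddCommGroup E] [InnerProductSpace ℝ E]
    (f : C → E) (U : Finset C) : ℝ :=
  ∑ p ∈ U, ‖f p - mean f U‖ ^ 2

def IsPartition [Fintype C] (Prt : Finset (Finset C)) : Prop :=
  (∀ U ∈ Prt, U.Nonempty) ∧ (∀ U ∈ Prt, ∀ V ∈ Prt, U ≠ V → Disjoint U V) ∧
    ∀ p : C, ∃ U ∈ Prt, p ∈ U

open scoped Classical in
/-- Sum of the weights of the edges of `ℰ` whose endpoints lie in different blocks of `Prt`. -/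
noncomputable def crossSum (ℰ : Finset (Sym2 C)) (w : Sym2 C → ℝ)
    (Prt : Finset (Finset C)) : ℝ :=
  ∑ e ∈ ℰ.filter (fun e => ¬ ∃ U ∈ Prt, ∀ p ∈ e, p ∈ U), w e

noncomputable def energy [Fintype C] [NormedAddCommGroup E] [InnerProductSpace ℝ E]
    (f : C → E) (ℰ : Finset (Sym2 C)) (w : Sym2 C → ℝ) (lam : ℝ)
    (Prt : Finset (Finset C)) : ℝ :=
  ∑ U ∈ Prt, cost f U + lam * crossSum ℰ w Prt

open scoped Classical in
/-- Sum of the weights of the edges of `ℰ` joining `P` and `Q`. -/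
noncomputable def joinSum (ℰ : Finset (Sym2 C)) (w : Sym2 C → ℝ) (P Q : Finset C) : ℝ :=
  ∑ e ∈ ℰ.filter (fun e => ∃ p ∈ P, ∃ q ∈ Q, e = Sym2.mk p q), w e

noncomputable def mergeGain [NormedAddCommGroup E] [InnerProductSpace ℝ E]
    (f : C → E) (ℰ : Finset (Sym2 C)) (w : Sym2 C → ℝ) (lam : ℝ)
    (P Q : Finset C) : ℝ :=
  -(((P.card : ℝ) * (Q.card : ℝ)) / ((P.card : ℝ) + (Q.card : ℝ))) *
      ‖mean f P - mean f Q‖ ^ 2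
    + lam * joinSum ℰ w P Q

/-! ### Auxiliary lemmas -/

lemma cost_eq' [NormedAddCommGroup E] [InnerProductSpace ℝ E]
    (f : C → E) (U : Finset C) (hU : U.Nonempty) :
    cost f U = (∑ p ∈ U, ‖f p‖ ^ 2) - (U.card : ℝ) * ‖mean f U‖ ^ 2 := by
  have hc : (U.card : ℝ) ≠ 0 := by
    exact_mod_cast Finset.card_ne_zero_of_mem hU.choose_spec
  have hsum : ∑ p ∈ U, f p = (U.card : ℝ) • mean f U := by
    rw [mean, smul_smul, mul_inv_cancel₀ hc, one_smul]
  have hexp : ∀ p ∈ U, ‖f p - mean f U‖ ^ 2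
      = ‖f p‖ ^ 2 - 2 * inner ℝ (f p) (mean f U) + ‖mean f U‖ ^ 2 :=
    fun p _ => norm_sub_sq_real (f p) (mean f U)
  rw [cost, Finset.sum_congr rfl hexp]
  rw [Finset.sum_add_distrib, Finset.sum_sub_distrib, Finset.sum_const, ← Finset.mul_sum,
    ← sum_inner, hsum, real_inner_smul_left, real_inner_self_eq_norm_sq]
  ring

lemma key_identity' [NormedAddCommGroup E] [InnerProductSpace ℝ E]
    (a b : E) (p q : ℝ) (hp : 0 < p) (hq : 0 < q) :
    (p + q) * ‖(p + q)⁻¹ • (p • a + q • b)‖ ^ 2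
      = p * ‖a‖ ^ 2 + q * ‖b‖ ^ 2 - (p * q / (p + q)) * ‖a - b‖ ^ 2 := by
  have hpq : 0 < p + q := by linarith
  have h1 : ‖a - b‖ ^ 2 = ‖a‖ ^ 2 - 2 * inner ℝ a b + ‖b‖ ^ 2 := norm_sub_sq_real a b
  have h2 : ‖p • a + q • b‖ ^ 2
      = p ^ 2 * ‖a‖ ^ 2 + 2 * (p * q * inner ℝ a b) + q ^ 2 * ‖b‖ ^ 2 := by
    rw [norm_add_sq_real, real_inner_smul_left, real_inner_smul_right, norm_smul, norm_smul,
      mul_pow, mul_pow]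
    simp [abs_of_pos hp, abs_of_pos hq]
    ring
  have h3 : ‖(p + q)⁻¹ • (p • a + q • b)‖ ^ 2 = ((p + q)⁻¹) ^ 2 * ‖p • a + q • b‖ ^ 2 := by
    rw [norm_smul, mul_pow]
    simp [abs_of_pos (inv_pos.mpr hpq)]
  rw [h3, h2, h1]
  field_simp
  ring

lemma cost_union' [DecidableEq C] [NormedAddCommGroup E] [InnerProductSpace ℝ E]
    (f : C → E) (P Q : Finset C) (hP : P.Nonempty) (hQ : Q.Nonempty) (hd : Disjoint P Q) :
    cost f (P ∪ Q) = cost f P + cost f Q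
      + ((P.card : ℝ) * (Q.card : ℝ) / ((P.card : ℝ) + (Q.card : ℝ)))
          * ‖mean f P - mean f Q‖ ^ 2 := by
  have hp : (0 : ℝ) < P.card := by exact_mod_cast Finset.card_pos.mpr hP
  have hq : (0 : ℝ) < Q.card := by exact_mod_cast Finset.card_pos.mpr hQ
  have hcard : ((P ∪ Q).card : ℝ) = (P.card : ℝ) + (Q.card : ℝ) := by
    rw [Finset.card_union_of_disjoint hd]; push_cast; ring
  have hsplit : ∀ g : C → ℝ, ∑ p ∈ P ∪ Q, g p = ∑ p ∈ P, g p + ∑ p ∈ Q, g p :=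
    fun g => Finset.sum_union hd
  have hsP : ∑ p ∈ P, f p = (P.card : ℝ) • mean f P := by
    rw [mean, smul_smul, mul_inv_cancel₀ hp.ne', one_smul]
  have hsQ : ∑ p ∈ Q, f p = (Q.card : ℝ) • mean f Q := by
    rw [mean, smul_smul, mul_inv_cancel₀ hq.ne', one_smul]
  have hmean : mean f (P ∪ Q)
      = ((P.card : ℝ) + (Q.card : ℝ))⁻¹ • ((P.card : ℝ) • mean f P + (Q.card : ℝ) • mean f Q) := by
    rw [mean, Finset.sum_union hd, hsP, hsQ, hcard]
  rw [cost_eq' f (P ∪ Q) (hP.mono Finset.subset_union_left), cost_eq' f P hP, cost_eq' f Q hQ,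
    hsplit, hcard, hmean, key_identity' _ _ _ _ hp hq]
  ring

lemma cross_split' [Fintype C] [DecidableEq C]
    (ℰ : Finset (Sym2 C)) (w : Sym2 C → ℝ)
    (Prt : Finset (Finset C)) (hPrt : IsPartition Prt)
    (P Q : Finset C) (hP : P ∈ Prt) (hQ : Q ∈ Prt) (hPQ : P ≠ Q) :
    crossSum ℰ w Prt
      = crossSum ℰ w (insert (P ∪ Q) ((Prt.erase P).erase Q)) + joinSum ℰ w P Q := by
  classical
  obtain ⟨hne, hdisj, -⟩ := hPrt
  set Prt' := insert (P ∪ Q) ((Prt.erase P).erase Q) with hPrt'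
  have hAJ : ∀ e ∈ ℰ, (∃ U ∈ Prt, ∀ p ∈ e, p ∈ U) →
      ¬ (∃ p ∈ P, ∃ q ∈ Q, e = Sym2.mk p q) := by
    rintro e he ⟨U, hU, hmem⟩ ⟨p, hp, q, hq, rfl⟩
    have hpU : p ∈ U := hmem p (by simp)
    have hqU : q ∈ U := hmem q (by simp)
    have hUP : U = P := by
      by_contra h
      exact Finset.notMem_empty p
        (by simpa using (hdisj U hU P hP h).le_bot (by simp [hpU, hp] : p ∈ U ⊓ P))
    have hUQ : U = Q := by
      by_contra h
      exact Finset.notMem_empty q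
        (by simpa using (hdisj U hU Q hQ h).le_bot (by simp [hqU, hq] : q ∈ U ⊓ Q))
    exact hPQ (hUP ▸ hUQ)
  have hiff : ∀ e ∈ ℰ, ((∃ U ∈ Prt', ∀ p ∈ e, p ∈ U) ↔
      (∃ U ∈ Prt, ∀ p ∈ e, p ∈ U) ∨ (∃ p ∈ P, ∃ q ∈ Q, e = Sym2.mk p q)) := by
    intro e he
    induction e using Sym2.inductionOn with
    | hf a b =>
      constructor
      · rintro ⟨U, hU, hmem⟩
        rw [hPrt', Finset.mem_insert] at hU
        have ha : a ∈ U := hmem a (by simp)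
        have hb : b ∈ U := hmem b (by simp)
        rcases hU with rfl | hU
        · rcases Finset.mem_union.mp ha with haP | haQ
          · rcases Finset.mem_union.mp hb with hbP | hbQ
            · exact Or.inl ⟨P, hP, by
                intro p hp; rcases Sym2.mem_iff.mp hp with rfl | rfl <;> assumption⟩
            · exact Or.inr ⟨a, haP, b, hbQ, rfl⟩
          · rcases Finset.mem_union.mp hb with hbP | hbQ
            · exact Or.inr ⟨b, hbP, a, haQ, Sym2.eq_swap⟩
            · exact Or.inl ⟨Q, hQ, by
                intro p hp; rcases Sym2.mem_iff.mp hp with rfl | rfl <;> assumption⟩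
        · exact Or.inl ⟨U, Finset.mem_of_mem_erase (Finset.mem_of_mem_erase hU), hmem⟩
      · rintro (⟨U, hU, hmem⟩ | ⟨p, hp, q, hq, heq⟩)
        · by_cases hUP : U = P
          · exact ⟨P ∪ Q, by simp [hPrt'],
              fun x hx => Finset.mem_union_left _ (hUP ▸ hmem x hx)⟩
          by_cases hUQ : U = Q
          · exact ⟨P ∪ Q, by simp [hPrt'],
              fun x hx => Finset.mem_union_right _ (hUQ ▸ hmem x hx)⟩
          exact ⟨U, by simp [hPrt', Finset.mem_erase, hUP, hUQ, hU], hmem⟩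
        · refine ⟨P ∪ Q, by simp [hPrt'], ?_⟩
          intro x hx
          rw [heq, Sym2.mem_iff] at hx
          rcases hx with rfl | rfl
          · exact Finset.mem_union_left _ hp
          · exact Finset.mem_union_right _ hq
  rw [crossSum, crossSum, joinSum, Finset.sum_filter, Finset.sum_filter, Finset.sum_filter,
    ← Finset.sum_add_distrib]
  refine Finset.sum_congr rfl fun e he => ?_
  have h1 := hiff e he
  have h2 := hAJ e he
  by_cases hJ : ∃ p ∈ P, ∃ q ∈ Q, e = Sym2.mk p q
  · have hA : ¬ ∃ U ∈ Prt, ∀ p ∈ e, p ∈ U := fun h => h2 h hJ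
    have hA' : ∃ U ∈ Prt', ∀ p ∈ e, p ∈ U := h1.mpr (Or.inr hJ)
    simp [hA, hA', hJ]
  · have h3 : (∃ U ∈ Prt', ∀ p ∈ e, p ∈ U) ↔ (∃ U ∈ Prt, ∀ p ∈ e, p ∈ U) := by
      rw [h1]; simp [hJ]
    by_cases hA : ∃ U ∈ Prt, ∀ p ∈ e, p ∈ U <;> simp [hA, hJ, h3]

/-- Merging two distinct blocks `P, Q` strictly decreases the energy iff
`‖F_P − F_Q‖² < λ · (Σ_{{p,q}∈ℰ, p∈P, q∈Q} w_{p,q}) · (|P|+|Q|)/(|P|·|Q|)`. -/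
theorem merge_decreases_energy_iff [Fintype C] [DecidableEq C]
    [NormedAddCommGroup E] [InnerProductSpace ℝ E]
    (f : C → E) (ℰ : Finset (Sym2 C)) (hℰ : ∀ e ∈ ℰ, ¬ e.IsDiag)
    (w : Sym2 C → ℝ) (hw : ∀ e ∈ ℰ, 0 < w e) (lam : ℝ) (hlam : 0 < lam)
    (Prt : Finset (Finset C)) (hPrt : IsPartition Prt)
    (P Q : Finset C) (hP : P ∈ Prt) (hQ : Q ∈ Prt) (hPQ : P ≠ Q) :
    energy f ℰ w lam (insert (P ∪ Q) ((Prt.erase P).erase Q)) < energy f ℰ w lam Prt ↔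
      ‖mean f P - mean f Q‖ ^ 2 <
        lam * joinSum ℰ w P Q *
          (((P.card : ℝ) + (Q.card : ℝ)) / ((P.card : ℝ) * (Q.card : ℝ))) := by
  classical
  obtain ⟨hne, hdisj, hcov⟩ := hPrt
  have hPne : P.Nonempty := hne P hP
  have hQne : Q.Nonempty := hne Q hQ
  have hd : Disjoint P Q := hdisj P hP Q hQ hPQ
  have hp : (0 : ℝ) < P.card := by exact_mod_cast Finset.card_pos.mpr hPne
  have hq : (0 : ℝ) < Q.card := by exact_mod_cast Finset.card_pos.mpr hQne
  set x := ‖mean f P - mean f Q‖ ^ 2 with hx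
  set D := (P.card : ℝ) * (Q.card : ℝ) / ((P.card : ℝ) + (Q.card : ℝ)) with hD
  set J := joinSum ℰ w P Q with hJ
  have hDpos : 0 < D := by positivity
  -- P ∪ Q is not in the erased partition
  have hnotmem : P ∪ Q ∉ (Prt.erase P).erase Q := by
    intro h
    have hmem : P ∪ Q ∈ Prt := Finset.mem_of_mem_erase (Finset.mem_of_mem_erase h)
    have hne1 : P ∪ Q ≠ P := by
      intro h'
      obtain ⟨q, hq'⟩ := hQne
      have : q ∈ P := h' ▸ Finset.mem_union_right P hq'
      exact (Finset.disjoint_left.mp hd this) hq'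
    have hdd := hdisj (P ∪ Q) hmem P hP hne1
    obtain ⟨p, hp'⟩ := hPne
    exact Finset.disjoint_left.mp hdd (Finset.mem_union_left _ hp') hp'
  have hQeP : Q ∈ Prt.erase P := Finset.mem_erase.mpr ⟨hPQ.symm, hQ⟩
  -- cost sums
  have hsum1 : ∑ U ∈ insert (P ∪ Q) ((Prt.erase P).erase Q), cost f U
      = cost f (P ∪ Q) + ∑ U ∈ (Prt.erase P).erase Q, cost f U :=
    Finset.sum_insert hnotmem
  have hsum2 : ∑ U ∈ Prt, cost f U
      = cost f P + (cost f Q + ∑ U ∈ (Prt.erase P).erase Q, cost f U) := by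
    rw [← Finset.add_sum_erase _ _ hP, ← Finset.add_sum_erase _ _ hQeP]
  have hcross := cross_split' ℰ w Prt ⟨hne, hdisj, hcov⟩ P Q hP hQ hPQ
  have hcost := cost_union' f P Q hPne hQne hd
  have hkey : energy f ℰ w lam (insert (P ∪ Q) ((Prt.erase P).erase Q))
      = energy f ℰ w lam Prt + D * x - lam * J := by
    rw [energy, energy, hsum1, hsum2, hcost]
    have : crossSum ℰ w (insert (P ∪ Q) ((Prt.erase P).erase Q))
        = crossSum ℰ w Prt - J := by rw [hcross]; ring
    rw [this, ← hx, ← hD]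
    ring
  rw [hkey]
  have hstep : energy f ℰ w lam Prt + D * x - lam * J < energy f ℰ w lam Prt ↔
      D * x < lam * J := by constructor <;> intro h <;> linarith
  rw [hstep]
  have hDform : lam * J * (((P.card : ℝ) + (Q.card : ℝ)) / ((P.card : ℝ) * (Q.card : ℝ)))
      = lam * J / D := by
    rw [hD]
    field_simp
  rw [hDform, lt_div_iff₀ hDpos, mul_comm]
end

section
/- The continuous and combinatorial problems have equal optimal values: the minimum over all maps Y : C → E of the functional Ω(Y) = Σ_{p∈C} ‖f p − Y p‖² + λ · Σ_{{p,q}∈ℰ, Y p ≠ Y q} w_{p,q} equals the minimum over all partitions 𝒫 of C into nonempty blocks of the combinatorial energy Ω(𝒫) = Σ_{U∈𝒫} W(U) + λ · Σ over pairs {p,q} ∈ ℰ whose endpoints lie in different blocks of 𝒫 of w_{p,q}. -/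
open Finset

variable {C E : Type*}

open scoped Classical in
/-- The continuous functional `Ω(Y) = Σ_p ‖f p − Y p‖² + λ · Σ_{{p,q}∈ℰ, Y p ≠ Y q} w_{p,q}`. -/
noncomputable def energyY [Fintype C] [NormedAddCommGroup E] [InnerProductSpace ℝ E]
    (f : C → E) (ℰ : Finset (Sym2 C)) (w : Sym2 C → ℝ) (lam : ℝ) (Y : C → E) : ℝ :=
  ∑ p, ‖f p - Y p‖ ^ 2 +
    lam * ∑ e ∈ ℰ.filter (fun e => ∃ p ∈ e, ∃ q ∈ e, Y p ≠ Y q), w e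

lemma cost_le_sum [NormedAddCommGroup E] [InnerProductSpace ℝ E] (f : C → E) (U : Finset C)
    (hU : U.Nonempty) (y : E) : cost f U ≤ ∑ p ∈ U, ‖f p - y‖ ^ 2 := by
  set μ : E := mean f U with hμ
  have hn : (U.card : ℝ) ≠ 0 := Nat.cast_ne_zero.2 hU.card_ne_zero
  have hsum : ∑ p ∈ U, (f p - μ) = 0 := by
    rw [Finset.sum_sub_distrib, Finset.sum_const, hμ, mean, ← Nat.cast_smul_eq_nsmul ℝ, smul_smul,
      mul_inv_cancel₀ hn, one_smul, sub_self]
  have key : ∀ p ∈ U, ‖f p - y‖ ^ 2 =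
      ‖f p - μ‖ ^ 2 + 2 * inner ℝ (f p - μ) (μ - y) + ‖μ - y‖ ^ 2 := by
    intro p _
    have : f p - y = (f p - μ) + (μ - y) := by abel
    rw [this, @norm_add_sq_real]
  rw [Finset.sum_congr rfl key]
  simp only [Finset.sum_add_distrib, ← Finset.sum_mul, ← Finset.mul_sum]
  rw [← sum_inner, hsum, inner_zero_left]
  have : (0:ℝ) ≤ ∑ _p ∈ U, ‖μ - y‖^2 := Finset.sum_nonneg fun _ _ => sq_nonneg _
  have : (0:ℝ) ≤ cost f U := Finset.sum_nonneg fun _ _ => sq_nonneg _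
  simp only [cost, ← hμ]
  linarith [Finset.sum_nonneg (fun p (_ : p ∈ U) => sq_nonneg ‖μ - y‖)]

lemma sum_partition [Fintype C] {Prt : Finset (Finset C)} (h : IsPartition Prt) (g : C → ℝ) :
    ∑ p, g p = ∑ U ∈ Prt, ∑ p ∈ U, g p := by
  classical
  rw [← Finset.sum_biUnion]
  · congr 1
    ext p
    simp only [Finset.mem_biUnion, Finset.mem_univ, iff_true, id]
    exact (iff_true_intro (h.2.2 p)).symm
  · intro U hU V hV hUV
    exact h.2.1 U hU V hV hUV

-- block of p
lemma block_eq [Fintype C] {Prt : Finset (Finset C)} (h : IsPartition Prt)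
    {U V : Finset C} (hU : U ∈ Prt) (hV : V ∈ Prt) {p : C} (hpU : p ∈ U) (hpV : p ∈ V) :
    U = V := by
  by_contra hne
  exact Finset.disjoint_left.1 (h.2.1 U hU V hV hne) hpU hpV

open scoped Classical in
/-- Lemma 1: induced partition does at least as well. -/
lemma energy_induced_le [Fintype C] [NormedAddCommGroup E] [InnerProductSpace ℝ E]
    (f : C → E) (ℰ : Finset (Sym2 C)) (w : Sym2 C → ℝ) (lam : ℝ) (hlam : 0 < lam)
    (Y : C → E) :
    ∃ Prt : Finset (Finset C), IsPartition Prt ∧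
      energy f ℰ w lam Prt ≤ energyY f ℰ w lam Y := by
  set Prt : Finset (Finset C) :=
    Finset.univ.image (fun p => Finset.univ.filter (fun q => Y q = Y p)) with hPrt
  have hmem : ∀ p : C, p ∈ Finset.univ.filter (fun q => Y q = Y p) := by
    intro p; simp
  have hP : IsPartition Prt := by
    refine ⟨?_, ?_, ?_⟩
    · intro U hU
      obtain ⟨p, -, rfl⟩ := Finset.mem_image.1 hU
      exact ⟨p, hmem p⟩
    · intro U hU V hV hUV
      obtain ⟨p, -, rfl⟩ := Finset.mem_image.1 hU
      obtain ⟨q, -, rfl⟩ := Finset.mem_image.1 hV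
      rw [Finset.disjoint_left]
      intro r hr hr'
      simp only [Finset.mem_filter] at hr hr'
      have hpq : Y p = Y q := hr.2.symm.trans hr'.2
      apply hUV
      ext x
      simp only [Finset.mem_filter, Finset.mem_univ, true_and]
      rw [hpq]
    · intro p
      exact ⟨_, Finset.mem_image_of_mem _ (Finset.mem_univ p), hmem p⟩
  refine ⟨Prt, hP, ?_⟩
  rw [energy, energyY]
  have hcross : crossSum ℰ w Prt = ∑ e ∈ ℰ.filter (fun e => ∃ p ∈ e, ∃ q ∈ e, Y p ≠ Y q), w e := by
    rw [crossSum]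
    apply Finset.sum_congr _ (fun _ _ => rfl)
    ext e
    simp only [Finset.mem_filter]
    refine and_congr_right fun heℰ => ?_
    induction e using Sym2.ind with
    | _ a b =>
      constructor
      · intro h
        by_contra hc
        push_neg at hc
        have hab : Y a = Y b := hc a (Sym2.mem_mk_left a b) b (Sym2.mem_mk_right a b)
        exact h ⟨_, Finset.mem_image_of_mem _ (Finset.mem_univ a), by
          intro p hp
          rcases Sym2.mem_iff.1 hp with rfl | rfl
          · exact hmem p
          · simp [hab]⟩
      · rintro ⟨p, hp, q, hq, hpq⟩ ⟨U, hU, hall⟩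
        obtain ⟨r, -, rfl⟩ := Finset.mem_image.1 hU
        have h1 := hall p hp
        have h2 := hall q hq
        simp only [Finset.mem_filter] at h1 h2
        exact hpq (h1.2.trans h2.2.symm)
  have hfid : ∑ U ∈ Prt, cost f U ≤ ∑ p, ‖f p - Y p‖ ^ 2 := by
    rw [sum_partition hP (fun p => ‖f p - Y p‖ ^ 2)]
    apply Finset.sum_le_sum
    intro U hU
    obtain ⟨p, -, rfl⟩ := Finset.mem_image.1 hU
    have : ∀ q ∈ Finset.univ.filter (fun q => Y q = Y p), ‖f q - Y q‖^2 = ‖f q - Y p‖^2 := by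
      intro q hq
      simp only [Finset.mem_filter] at hq
      rw [hq.2]
    rw [Finset.sum_congr rfl this]
    exact cost_le_sum f _ ⟨p, hmem p⟩ (Y p)
  rw [hcross]
  linarith

set_option maxHeartbeats 1000000 in
open scoped Classical in
/-- Lemma 2: choosing means realizes at most the partition energy. -/
lemma exists_Y_le_energy [Fintype C] [NormedAddCommGroup E] [InnerProductSpace ℝ E]
    (f : C → E) (ℰ : Finset (Sym2 C)) (w : Sym2 C → ℝ) (hw : ∀ e ∈ ℰ, 0 < w e)
    (lam : ℝ) (hlam : 0 < lam)
    (Prt : Finset (Finset C)) (hP : IsPartition Prt) :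
    ∃ Y : C → E, energyY f ℰ w lam Y ≤ energy f ℰ w lam Prt := by
  have hex : ∀ p : C, ∃ U, U ∈ Prt ∧ p ∈ U := by
    intro p; obtain ⟨U, h1, h2⟩ := hP.2.2 p; exact ⟨U, h1, h2⟩
  choose blk hblk1 hblk2 using hex
  have hblkeq : ∀ {p : C} {U : Finset C}, U ∈ Prt → p ∈ U → blk p = U :=
    fun {p U} hU hp => block_eq hP (hblk1 p) hU (hblk2 p) hp
  refine ⟨fun p => mean f (blk p), ?_⟩
  simp only [energyY, energy]
  have hfid : ∑ p, ‖f p - mean f (blk p)‖ ^ 2 = ∑ U ∈ Prt, cost f U := by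
    rw [sum_partition hP]
    apply Finset.sum_congr rfl
    intro U hU
    apply Finset.sum_congr rfl
    intro p hp
    rw [hblkeq hU hp]
  rw [hfid, crossSum]
  apply add_le_add le_rfl
  apply mul_le_mul_of_nonneg_left _ hlam.le
  apply Finset.sum_le_sum_of_subset_of_nonneg
  · intro e he
    simp only [Finset.mem_filter] at he ⊢
    obtain ⟨heℰ, p, hp, q, hq, hpq⟩ := he
    refine ⟨heℰ, ?_⟩
    rintro ⟨U, hU, hall⟩
    exact hpq (by rw [hblkeq hU (hall p hp), hblkeq hU (hall q hq)])
  · intro e he _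
    simp only [Finset.mem_filter] at he
    exact (hw e he.1).le

/-- The continuous and combinatorial problems have equal optimal values:
the minimum of `Ω(Y)` over all maps `Y : C → E` equals the minimum of the combinatorial
energy `Ω(𝒫)` over all partitions of `C` into nonempty blocks. -/
theorem continuous_eq_combinatorial_min [Fintype C] [Nonempty C] [DecidableEq C]
    [NormedAddCommGroup E] [InnerProductSpace ℝ E]
    (f : C → E) (ℰ : Finset (Sym2 C)) (hℰ : ∀ e ∈ ℰ, ¬ e.IsDiag)
    (w : Sym2 C → ℝ) (hw : ∀ e ∈ ℰ, 0 < w e) (lam : ℝ) (hlam : 0 < lam) :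
    ∃ m : ℝ,
      IsLeast {r : ℝ | ∃ Y : C → E, r = energyY f ℰ w lam Y} m ∧
      IsLeast {r : ℝ | ∃ Prt : Finset (Finset C), IsPartition Prt ∧
        r = energy f ℰ w lam Prt} m := by
  classical
  set SP := {r : ℝ | ∃ Prt : Finset (Finset C), IsPartition Prt ∧ r = energy f ℰ w lam Prt}
    with hSP
  have hfin : SP.Finite := by
    apply Set.Finite.subset (Set.finite_range (energy f ℰ w lam))
    rintro r ⟨Prt, -, rfl⟩
    exact ⟨Prt, rfl⟩
  have hne : SP.Nonempty := by
    refine ⟨energy f ℰ w lam {Finset.univ}, {Finset.univ}, ⟨?_, ?_, ?_⟩, rfl⟩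
    · intro U hU
      rw [Finset.mem_singleton] at hU
      subst hU
      exact Finset.univ_nonempty
    · intro U hU V hV hUV
      rw [Finset.mem_singleton] at hU hV
      subst hU; subst hV
      exact absurd rfl hUV
    · intro p
      exact ⟨Finset.univ, Finset.mem_singleton_self _, Finset.mem_univ p⟩
  obtain ⟨m, hmSP, hmin⟩ : ∃ m ∈ SP, ∀ r ∈ SP, id r ≤ id m → id m = id r := by
    obtain ⟨m, hm, h⟩ := Set.exists_min_image SP id hfin hne
    exact ⟨m, hm, fun r hr hle => le_antisymm (h r hr) hle⟩
  have hlb : ∀ r ∈ SP, m ≤ r := by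
    intro r hr
    by_contra h
    push_neg at h
    exact h.ne (hmin r hr h.le).symm
  have hlbY : ∀ Y : C → E, m ≤ energyY f ℰ w lam Y := by
    intro Y
    obtain ⟨Prt, hPrt, hle⟩ := energy_induced_le f ℰ w lam hlam Y
    exact le_trans (hlb _ ⟨Prt, hPrt, rfl⟩) hle
  obtain ⟨Prt0, hP0, hm0⟩ := hmSP
  obtain ⟨Y0, hY0⟩ := exists_Y_le_energy f ℰ w hw lam hlam Prt0 hP0
  have hY0eq : energyY f ℰ w lam Y0 = m := le_antisymm (hm0 ▸ hY0) (hlbY Y0)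
  refine ⟨m, ⟨⟨Y0, hY0eq.symm⟩, ?_⟩, ⟨⟨Prt0, hP0, hm0⟩, ?_⟩⟩
  · rintro r ⟨Y, rfl⟩
    exact hlbY Y
  · rintro r ⟨Prt, hPrt, rfl⟩
    exact hlb _ ⟨Prt, hPrt, rfl⟩
end
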